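/- Let n ≥ 1 and let p = (p_n, p_n', q_n, …, p_1, p_1', q_1) ∈ I_n and t = (t_n, t_n', u_n, …, t_1, t_1', u_1) ∈ I_n satisfy p_i + p_i' = t_i + t_i' and q_i = u_i for all i ∈ {1,…,n}. If (p_n, p_{n−1}, …, p_1) strictly precedes (t_n, t_{n−1}, …, t_1) in the lexicographic order on ℕ₀^n, then s_p < s_t. -/

import Mathlib

open Matrix

noncomputable section

/-- `M1 = [[1,1,0],[0,1,0],[0,0,1]]`. -/
def M1 : Matrix (Fin 3) (Fin 3) ℝ := !![1, 1, 0; 0, 1, 0; 0, 0, 1]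

/-- `M2 = [[1,0,0],[1,1,1],[0,0,1]]`. -/
def M2 : Matrix (Fin 3) (Fin 3) ℝ := !![1, 0, 0; 1, 1, 1; 0, 0, 1]

/-- `M3 = [[1,0,0],[0,1,0],[0,1,1]]`. -/
def M3 : Matrix (Fin 3) (Fin 3) ℝ := !![1, 0, 0; 0, 1, 0; 0, 1, 1]

/- A tuple `p = (p_n, p_n', q_n, …, p_1, p_1', q_1) ∈ ℕ₀^{3n}` is encoded by three
functions `P P' Q : Fin n → ℕ`, where the index `i : Fin n` corresponds to the
subscript `i + 1` (so `P ⟨0,_⟩ = p_1`, …, `P ⟨n-1,_⟩ = p_n`). -/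

/-- The transition matrix `M_p = M1^{p_n} M3^{p_n'} M2^{q_n} ⋯ M1^{p_1} M3^{p_1'} M2^{q_1}`. -/
def Mp (n : ℕ) (P P' Q : Fin n → ℕ) : Matrix (Fin 3) (Fin 3) ℝ :=
  ((List.finRange n).map fun i => M1 ^ P i.rev * M3 ^ P' i.rev * M2 ^ Q i.rev).prod

/-- Membership of the tuple `p` in `I_n`. -/
def memI (n : ℕ) (P P' Q : Fin n → ℕ) : Prop :=
  (∀ i, 0 < Q i) ∧ (∀ i, 0 < P i + P' i) ∧ (∃ j, 0 < P j) ∧ (∃ k, 0 < P' k)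

/-- Finite continued fraction: `cf [a₁, …, a_m] x = 1/(a₁ + 1/(a₂ + ⋯ + 1/(a_m + x)))`. -/
def cf (l : List ℕ) (x : ℝ) : ℝ := l.foldr (fun a y => 1 / (a + y)) x

/-- The (0-indexed) block index `k(j+1) - 1 = n - 1 - (j mod n)` used at step `j + 1`. -/
def blk (n : ℕ) (hn : 0 < n) (j : ℕ) : Fin n :=
  ⟨n - 1 - j % n, lt_of_le_of_lt (Nat.sub_le _ _) (Nat.sub_lt hn one_pos)⟩

/-- The sequence `(a₁, …, a_{2n}) = (p_n + p_n', q_n, …, p_1 + p_1', q_1)` as a list. -/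
def aList (n : ℕ) (hn : 0 < n) (P P' Q : Fin n → ℕ) : List ℕ :=
  (List.range n).flatMap fun i => [P (blk n hn i) + P' (blk n hn i), Q (blk n hn i)]

/-- `isH0 n hn P P' Q h0` says that `h0` is the number `h_{p,0}`: a real number in `(0,1)`
that is a fixed point of `x ↦ 1/(a₁ + 1/(a₂ + ⋯ + 1/(a_{2n} + x)))` (there is exactly one). -/
def isH0 (n : ℕ) (hn : 0 < n) (P P' Q : Fin n → ℕ) (h0 : ℝ) : Prop :=
  h0 ∈ Set.Ioo (0 : ℝ) 1 ∧ cf (aList n hn P P' Q) h0 = h0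

/-- The pair `(w_{p,j}, h_{p,j})`, with `w_{p,0} = 1`, `h_{p,0} = h0`, and for `j ≥ 1`:
`w_{p,j} = w_{p,j-1} − (p_{k(j)} + p'_{k(j)}) h_{p,j-1}`, `h_{p,j} = h_{p,j-1} − q_{k(j)} w_{p,j}`. -/
def wh (n : ℕ) (hn : 0 < n) (P P' Q : Fin n → ℕ) (h0 : ℝ) : ℕ → ℝ × ℝ
  | 0 => (1, h0)
  | j + 1 =>
    let prev := wh n hn P P' Q h0 j
    let b := blk n hn j
    let w := prev.1 - ((P b : ℝ) + (P' b : ℝ)) * prev.2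
    (w, prev.2 - (Q b : ℝ) * w)

/-- The width `w_{p,j}`. -/
def wseq (n : ℕ) (hn : 0 < n) (P P' Q : Fin n → ℕ) (h0 : ℝ) (j : ℕ) : ℝ :=
  (wh n hn P P' Q h0 j).1

/-- The height `h_{p,j}`. -/
def hseq (n : ℕ) (hn : 0 < n) (P P' Q : Fin n → ℕ) (h0 : ℝ) (j : ℕ) : ℝ :=
  (wh n hn P P' Q h0 j).2

/-- The split ratio `s_p = Σ_{i=0}^∞ p_{k(i+1)} h_{p,i}`. -/
def splitRatio (n : ℕ) (hn : 0 < n) (P P' Q : Fin n → ℕ) (h0 : ℝ) : ℝ :=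
  ∑' i : ℕ, (P (blk n hn i) : ℝ) * hseq n hn P P' Q h0 i

/-- The reindexing realizing the shift `T`: the tuple `T(p)` is given by the functions
`P ∘ shiftIdx n hn`, `P' ∘ shiftIdx n hn`, `Q ∘ shiftIdx n hn`. -/
def shiftIdx (n : ℕ) (hn : 0 < n) (i : Fin n) : Fin n :=
  ⟨(i.val + (n - 1)) % n, Nat.mod_lt _ hn⟩


namespace Stmt11Aux

lemma cf_nil (x : ℝ) : cf [] x = x := rfl
lemma cf_cons (a : ℕ) (l : List ℕ) (x : ℝ) : cf (a :: l) x = 1 / (a + cf l x) := rfl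

lemma cf_nonneg (l : List ℕ) {x : ℝ} (hx : 0 ≤ x) : 0 ≤ cf l x := by
  induction l with
  | nil => exact hx
  | cons a l ih =>
    rw [cf_cons]
    exact div_nonneg zero_le_one (add_nonneg (Nat.cast_nonneg a) ih)

lemma step_lt {a : ℕ} (ha : 1 ≤ a) {u v : ℝ} (hu : 0 ≤ u) (hv : 0 ≤ v) (huv : u ≠ v) :
    |1/((a:ℝ)+u) - 1/((a:ℝ)+v)| < |u - v| := by
  have ha' : (1:ℝ) ≤ a := by exact_mod_cast ha
  have h1 : (0:ℝ) < a + u := by linarith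
  have h2 : (0:ℝ) < a + v := by linarith
  have hd : (1:ℝ) < ((a:ℝ)+u)*((a:ℝ)+v) := by
    rcases huv.lt_or_gt with h | h
    · nlinarith
    · nlinarith
  have he : 1/((a:ℝ)+u) - 1/((a:ℝ)+v) = (v-u)/(((a:ℝ)+u)*((a:ℝ)+v)) := by
    field_simp
    ring
  rw [he, abs_div, abs_of_pos (by nlinarith : (0:ℝ) < ((a:ℝ)+u)*((a:ℝ)+v)), abs_sub_comm v u]
  have h4 : 0 < |u - v| := abs_pos.mpr (sub_ne_zero.mpr huv)
  calc |u-v| / (((a:ℝ)+u)*((a:ℝ)+v)) < |u-v| / 1 := by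
        exact div_lt_div_of_pos_left h4 one_pos hd
    _ = |u - v| := div_one _

lemma step_le {a : ℕ} (ha : 1 ≤ a) {u v : ℝ} (hu : 0 ≤ u) (hv : 0 ≤ v) :
    |1/((a:ℝ)+u) - 1/((a:ℝ)+v)| ≤ |u - v| := by
  by_cases h : u = v
  · subst h; simp
  · exact (step_lt ha hu hv h).le

lemma cf_abs_le (l : List ℕ) (h1 : ∀ a ∈ l, 1 ≤ a) {x y : ℝ} (hx : 0 ≤ x) (hy : 0 ≤ y) :
    |cf l x - cf l y| ≤ |x - y| := by
  induction l with
  | nil => simp [cf_nil]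
  | cons a l ih =>
    rw [cf_cons, cf_cons]
    refine le_trans (step_le (h1 a (by simp)) (cf_nonneg l hx) (cf_nonneg l hy)) ?_
    exact ih (fun b hb => h1 b (by simp [hb]))

lemma cf_abs_lt (l : List ℕ) (hl : l ≠ []) (h1 : ∀ a ∈ l, 1 ≤ a) {x y : ℝ}
    (hx : 0 ≤ x) (hy : 0 ≤ y) (hxy : x ≠ y) : |cf l x - cf l y| < |x - y| := by
  obtain ⟨a, l', rfl⟩ : ∃ a l', l = a :: l' := by
    cases l with
    | nil => exact absurd rfl hl
    | cons a l' => exact ⟨a, l', rfl⟩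
  by_cases h : cf l' x = cf l' y
  · rw [cf_cons, cf_cons, h, sub_self, abs_zero]
    exact abs_pos.mpr (sub_ne_zero.mpr hxy)
  · rw [cf_cons, cf_cons]
    refine lt_of_lt_of_le (step_lt (h1 a (by simp)) (cf_nonneg l' hx) (cf_nonneg l' hy) h) ?_
    exact cf_abs_le l' (fun b hb => h1 b (by simp [hb])) hx hy

lemma cf_fixed_unique (l : List ℕ) (hl : l ≠ []) (h1 : ∀ a ∈ l, 1 ≤ a) {x y : ℝ}
    (hx : 0 ≤ x) (hy : 0 ≤ y) (hfx : cf l x = x) (hfy : cf l y = y) : x = y := by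
  by_contra h
  have := cf_abs_lt l hl h1 hx hy h
  rw [hfx, hfy] at this
  exact lt_irrefl _ this

lemma cf_pos (l : List ℕ) {x : ℝ} (hx : 0 < x) : 0 < cf l x := by
  induction l with
  | nil => exact hx
  | cons a l ih =>
    rw [cf_cons]
    exact div_pos one_pos (add_pos_of_nonneg_of_pos (Nat.cast_nonneg a) ih)

lemma flatMap_pair_drop (f g : ℕ → ℕ) (l : List ℕ) : ∀ (r : ℕ),
    ((l.flatMap fun i => [f i, g i]).drop (2*r)) = (l.drop r).flatMap fun i => [f i, g i] := by
  induction l with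
  | nil => intro r; simp
  | cons a t ih =>
    intro r
    cases r with
    | zero => simp
    | succ r =>
      have h2 : 2*(r+1) = 2*r+1+1 := by ring
      rw [h2, List.flatMap_cons]
      show List.drop (2*r+1+1) (f a :: g a :: t.flatMap _) = _
      rw [List.drop_succ_cons, List.drop_succ_cons, ih, List.drop_succ_cons]

section main
set_option linter.unusedSectionVars false
variable (n : ℕ) (hn : 0 < n) (P P' Q : Fin n → ℕ) (h0 : ℝ)

lemma blk_mod (j : ℕ) : blk n hn j = blk n hn (j % n) := by
  unfold blk; congr 1; rw [Nat.mod_mod_of_dvd _ dvd_rfl]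

lemma aList_drop {r : ℕ} (hr : r < n) :
    (aList n hn P P' Q).drop (2*r) =
      (P (blk n hn r) + P' (blk n hn r)) :: Q (blk n hn r) ::
        (aList n hn P P' Q).drop (2*(r+1)) := by
  unfold aList
  rw [flatMap_pair_drop, flatMap_pair_drop]
  rw [List.drop_eq_getElem_cons (by simpa using hr)]
  simp [List.flatMap_cons]

lemma aList_drop_len : (aList n hn P P' Q).drop (2*n) = [] := by
  unfold aList
  rw [flatMap_pair_drop, List.drop_eq_nil_of_le (by simp)]
  simp

lemma mod_succ_lt {j : ℕ} (h : j % n + 1 < n) : (j+1) % n = j % n + 1 := by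
  conv_lhs => rw [← Nat.div_add_mod j n]
  rw [add_assoc, Nat.mul_add_mod]
  exact Nat.mod_eq_of_lt h

lemma mod_succ_eq {j : ℕ} (h : j % n + 1 = n) : (j+1) % n = 0 := by
  conv_lhs => rw [← Nat.div_add_mod j n]
  rw [add_assoc, Nat.mul_add_mod, h, Nat.mod_self]

/-- the continued-fraction tail `z_{2j}`. -/
def uu (j : ℕ) : ℝ := cf ((aList n hn P P' Q).drop (2 * (j % n))) h0

/-- the continued-fraction tail `z_{2j+1}`. -/
def vv (j : ℕ) : ℝ := cf (Q (blk n hn j) :: (aList n hn P P' Q).drop (2 * (j % n) + 2)) h0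

/-- the width `w_j` as a product. -/
def WW : ℕ → ℝ
  | 0 => 1
  | j + 1 => WW j * (uu n hn P P' Q h0 j * vv n hn P P' Q h0 j)

variable (hQ : ∀ i, 0 < Q i) (hPP : ∀ i, 0 < P i + P' i) (hh0 : isH0 n hn P P' Q h0)

include hQ hPP hh0

lemma u_pos (j : ℕ) : 0 < uu n hn P P' Q h0 j := cf_pos _ hh0.1.1

lemma v_pos (j : ℕ) : 0 < vv n hn P P' Q h0 j := cf_pos _ hh0.1.1

lemma u_zero : uu n hn P P' Q h0 0 = h0 := by
  unfold uu
  rw [Nat.zero_mod, Nat.mul_zero, List.drop_zero, hh0.2]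

lemma u_eq (j : ℕ) : uu n hn P P' Q h0 j =
    1 / ((P (blk n hn j) + P' (blk n hn j) : ℕ) + vv n hn P P' Q h0 j) := by
  unfold uu vv
  rw [aList_drop n hn P P' Q (Nat.mod_lt j hn), cf_cons]
  rw [blk_mod n hn j]
  norm_num [Nat.mul_add]

lemma v_eq (j : ℕ) : vv n hn P P' Q h0 j =
    1 / ((Q (blk n hn j) : ℝ) + uu n hn P P' Q h0 (j+1)) := by
  unfold vv uu
  rw [cf_cons]
  rcases lt_or_eq_of_le (Nat.succ_le_of_lt (Nat.mod_lt j hn)) with h | h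
  · rw [mod_succ_lt n h]
    ring_nf
  · rw [mod_succ_eq n h]
    have h2n : 2 * (j % n) + 2 = 2 * n := by omega
    rw [h2n, aList_drop_len]
    simp only [Nat.mul_zero, List.drop_zero, hh0.2]
    rfl

lemma u_lt_one (j : ℕ) : uu n hn P P' Q h0 j < 1 := by
  rw [u_eq n hn P P' Q h0 hQ hPP hh0 j]
  have h1 : (1:ℝ) ≤ (P (blk n hn j) + P' (blk n hn j) : ℕ) := by
    exact_mod_cast hPP (blk n hn j)
  have h2 := v_pos n hn P P' Q h0 hQ hPP hh0 j
  rw [div_lt_one (by linarith)]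
  linarith

lemma v_lt_one (j : ℕ) : vv n hn P P' Q h0 j < 1 := by
  rw [v_eq n hn P P' Q h0 hQ hPP hh0 j]
  have h1 : (1:ℝ) ≤ (Q (blk n hn j) : ℝ) := by exact_mod_cast hQ (blk n hn j)
  have h2 := u_pos n hn P P' Q h0 hQ hPP hh0 (j+1)
  rw [div_lt_one (by linarith)]
  linarith

lemma u_id (j : ℕ) :
    uu n hn P P' Q h0 j * (((P (blk n hn j) : ℝ) + P' (blk n hn j)) + vv n hn P P' Q h0 j) = 1 := by
  have h1 : (0:ℝ) < ((P (blk n hn j) : ℝ) + P' (blk n hn j)) + vv n hn P P' Q h0 j := by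
    have := v_pos n hn P P' Q h0 hQ hPP hh0 j
    positivity
  rw [u_eq n hn P P' Q h0 hQ hPP hh0 j]
  push_cast
  field_simp

lemma v_id (j : ℕ) :
    vv n hn P P' Q h0 j * ((Q (blk n hn j) : ℝ) + uu n hn P P' Q h0 (j+1)) = 1 := by
  have h1 : (0:ℝ) < (Q (blk n hn j) : ℝ) + uu n hn P P' Q h0 (j+1) := by
    have := u_pos n hn P P' Q h0 hQ hPP hh0 (j+1)
    positivity
  rw [v_eq n hn P P' Q h0 hQ hPP hh0 j]
  field_simp

lemma W_pos (j : ℕ) : 0 < WW n hn P P' Q h0 j := by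
  induction j with
  | zero => exact one_pos
  | succ j ih =>
    exact mul_pos ih (mul_pos (u_pos n hn P P' Q h0 hQ hPP hh0 j) (v_pos n hn P P' Q h0 hQ hPP hh0 j))

lemma wh_eq (j : ℕ) : wh n hn P P' Q h0 j =
    (WW n hn P P' Q h0 j, WW n hn P P' Q h0 j * uu n hn P P' Q h0 j) := by
  induction j with
  | zero =>
    show (1, h0) = _
    rw [u_zero n hn P P' Q h0 hQ hPP hh0]
    norm_num [WW]
  | succ j ih =>
    have h1 := u_id n hn P P' Q h0 hQ hPP hh0 j
    have h2 := v_id n hn P P' Q h0 hQ hPP hh0 j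
    simp only [wh, ih, WW]
    rw [Prod.mk.injEq]
    constructor
    · linear_combination (-(WW n hn P P' Q h0 j)) * h1
    · linear_combination (((Q (blk n hn j)) : ℝ) * WW n hn P P' Q h0 j) * h1
        - (WW n hn P P' Q h0 j * uu n hn P P' Q h0 j) * h2

lemma hseq_eq (j : ℕ) : (wh n hn P P' Q h0 j).2 = WW n hn P P' Q h0 j * uu n hn P P' Q h0 j := by
  rw [wh_eq n hn P P' Q h0 hQ hPP hh0 j]

lemma uv_lt_half (j : ℕ) : uu n hn P P' Q h0 j * vv n hn P P' Q h0 j < 1/2 := by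
  have hA : (1:ℝ) ≤ (P (blk n hn j) : ℝ) + P' (blk n hn j) := by
    exact_mod_cast hPP (blk n hn j)
  have hv0 := v_pos n hn P P' Q h0 hQ hPP hh0 j
  have hv1 := v_lt_one n hn P P' Q h0 hQ hPP hh0 j
  have hu0 := u_pos n hn P P' Q h0 hQ hPP hh0 j
  have h1 := u_id n hn P P' Q h0 hQ hPP hh0 j
  nlinarith

lemma W_le (j : ℕ) : WW n hn P P' Q h0 j ≤ (1/2)^j := by
  induction j with
  | zero => norm_num [WW]
  | succ j ih =>
    have h1 := uv_lt_half n hn P P' Q h0 hQ hPP hh0 j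
    have h2 := W_pos n hn P P' Q h0 hQ hPP hh0 j
    have h3 : (0:ℝ) < uu n hn P P' Q h0 j * vv n hn P P' Q h0 j :=
      mul_pos (u_pos n hn P P' Q h0 hQ hPP hh0 j) (v_pos n hn P P' Q h0 hQ hPP hh0 j)
    calc WW n hn P P' Q h0 (j+1) = WW n hn P P' Q h0 j * (uu n hn P P' Q h0 j * vv n hn P P' Q h0 j) := rfl
      _ ≤ (1/2)^j * (1/2) := by
          apply mul_le_mul ih h1.le h3.le (by positivity)
      _ = (1/2)^(j+1) := by ring

lemma telescope (j : ℕ) :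
    ((P (blk n hn j) : ℝ) + P' (blk n hn j)) * (WW n hn P P' Q h0 j * uu n hn P P' Q h0 j)
      = WW n hn P P' Q h0 j - WW n hn P P' Q h0 (j+1) := by
  have h1 := u_id n hn P P' Q h0 hQ hPP hh0 j
  show _ = _ - WW n hn P P' Q h0 j * (uu n hn P P' Q h0 j * vv n hn P P' Q h0 j)
  linear_combination (WW n hn P P' Q h0 j) * h1

lemma term_bound (c : ℕ → ℕ) (hc : ∀ i, c i ≤ P (blk n hn i) + P' (blk n hn i)) (i : ℕ) :
    (c i : ℝ) * (WW n hn P P' Q h0 i * uu n hn P P' Q h0 i)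
      ≤ WW n hn P P' Q h0 i - WW n hn P P' Q h0 (i+1) := by
  rw [← telescope n hn P P' Q h0 hQ hPP hh0 i]
  have h1 : (c i : ℝ) ≤ (P (blk n hn i) : ℝ) + P' (blk n hn i) := by
    exact_mod_cast hc i
  have h2 : 0 < WW n hn P P' Q h0 i * uu n hn P P' Q h0 i :=
    mul_pos (W_pos n hn P P' Q h0 hQ hPP hh0 i) (u_pos n hn P P' Q h0 hQ hPP hh0 i)
  exact mul_le_mul_of_nonneg_right h1 h2.le

lemma summable_aux (c : ℕ → ℕ) (hc : ∀ i, c i ≤ P (blk n hn i) + P' (blk n hn i)) :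
    Summable fun i => (c i : ℝ) * (WW n hn P P' Q h0 i * uu n hn P P' Q h0 i) := by
  apply Summable.of_nonneg_of_le (fun i => by
    have h2 : 0 < WW n hn P P' Q h0 i * uu n hn P P' Q h0 i :=
      mul_pos (W_pos n hn P P' Q h0 hQ hPP hh0 i) (u_pos n hn P P' Q h0 hQ hPP hh0 i)
    positivity) (fun i => ?_) (summable_geometric_of_lt_one (by norm_num) (by norm_num) :
      Summable fun i : ℕ => (1/2:ℝ)^i)
  calc (c i : ℝ) * (WW n hn P P' Q h0 i * uu n hn P P' Q h0 i)
      ≤ WW n hn P P' Q h0 i - WW n hn P P' Q h0 (i+1) := term_bound n hn P P' Q h0 hQ hPP hh0 c hc i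
    _ ≤ WW n hn P P' Q h0 i := by
        have := W_pos n hn P P' Q h0 hQ hPP hh0 (i+1); linarith
    _ ≤ (1/2)^i := W_le n hn P P' Q h0 hQ hPP hh0 i

lemma tail_bound (c : ℕ → ℕ) (hc : ∀ i, c i ≤ P (blk n hn i) + P' (blk n hn i)) (m : ℕ) :
    (∑' i : ℕ, (c (i + (m+1)) : ℝ) * (WW n hn P P' Q h0 (i + (m+1)) * uu n hn P P' Q h0 (i + (m+1))))
      ≤ WW n hn P P' Q h0 (m+1) := by
  have hs : Summable fun i => (c (i + (m+1)) : ℝ) *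
      (WW n hn P P' Q h0 (i + (m+1)) * uu n hn P P' Q h0 (i + (m+1))) :=
    (summable_nat_add_iff (f := fun i => (c i : ℝ) *
      (WW n hn P P' Q h0 i * uu n hn P P' Q h0 i)) (m+1)).mpr
      (summable_aux n hn P P' Q h0 hQ hPP hh0 c hc)
  apply Summable.tsum_le_of_sum_range_le hs
  intro N
  calc ∑ i ∈ Finset.range N, (c (i + (m+1)) : ℝ) *
        (WW n hn P P' Q h0 (i + (m+1)) * uu n hn P P' Q h0 (i + (m+1)))
      ≤ ∑ i ∈ Finset.range N,
        (WW n hn P P' Q h0 (i + (m+1)) - WW n hn P P' Q h0 (i + 1 + (m+1))) := by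
        apply Finset.sum_le_sum
        intro i _
        have := term_bound n hn P P' Q h0 hQ hPP hh0 c hc (i + (m+1))
        have he : i + (m+1) + 1 = i + 1 + (m+1) := by omega
        rw [he] at this
        exact this
    _ = WW n hn P P' Q h0 (0 + (m+1)) - WW n hn P P' Q h0 (N + (m+1)) := by
        exact Finset.sum_range_sub' (fun i => WW n hn P P' Q h0 (i + (m+1))) N
    _ ≤ WW n hn P P' Q h0 (m+1) := by
        have := W_pos n hn P P' Q h0 hQ hPP hh0 (N + (m+1))
        simp only [Nat.zero_add]
        linarith

end main


end Stmt11Aux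

open Stmt11Aux

/-- if `p, t ∈ I_n` satisfy `p_i + p_i' = t_i + t_i'` and `q_i = u_i` for
all `i`, and `(p_n, …, p_1)` strictly precedes `(t_n, …, t_1)` lexicographically,
then `s_p < s_t`.  (For `i < n`, position `i` of `(p_n, …, p_1)` is `p` at index
`blk n hn i = ⟨n - 1 - i, _⟩`.) -/
theorem stmt11 (n : ℕ) (hn : 0 < n) (P P' Q R R' U : Fin n → ℕ)
    (hP : memI n P P' Q) (hT : memI n R R' U)
    (hsum : ∀ i, P i + P' i = R i + R' i) (hq : ∀ i, Q i = U i)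
    (hlex : ∃ m : ℕ, m < n ∧ (∀ i, i < m → P (blk n hn i) = R (blk n hn i)) ∧
      P (blk n hn m) < R (blk n hn m))
    (h0p h0t : ℝ) (hh0p : isH0 n hn P P' Q h0p) (hh0t : isH0 n hn R R' U h0t) :
    splitRatio n hn P P' Q h0p < splitRatio n hn R R' U h0t := by
  obtain ⟨m, hmn, hpre, hstrict⟩ := hlex
  obtain ⟨hQp, hPPp, -, -⟩ := hP
  obtain ⟨hQt, hPPt, -, -⟩ := hT
  -- the coefficient lists agree
  have hL : aList n hn P P' Q = aList n hn R R' U := by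
    unfold aList
    congr 1
    funext i
    rw [hsum, hq]
  -- hence the base heights agree
  have hd0 := aList_drop n hn P P' Q (r := 0) hn
  simp only [Nat.mul_zero, List.drop_zero] at hd0
  have hne : aList n hn P P' Q ≠ [] := by rw [hd0]; exact List.cons_ne_nil _ _
  have hent : ∀ a ∈ aList n hn P P' Q, 1 ≤ a := by
    intro a ha
    simp only [aList, List.mem_flatMap, List.mem_range, List.mem_cons,
      List.not_mem_nil, or_false] at ha
    obtain ⟨i, -, hi⟩ := ha
    rcases hi with h | h
    · subst h; exact hPPp _
    · subst h; exact hQp _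
  have h0eq : h0t = h0p := by
    refine cf_fixed_unique _ hne hent hh0t.1.1.le hh0p.1.1.le ?_ hh0p.2
    rw [hL]; exact hh0t.2
  subst h0eq
  -- the pair sequences agree
  have hwh : ∀ j, wh n hn R R' U h0t j = wh n hn P P' Q h0t j := by
    intro j
    induction j with
    | zero => rfl
    | succ j ih =>
      simp only [wh, ih]
      have e1 : ((R (blk n hn j) : ℝ) + R' (blk n hn j))
          = (P (blk n hn j) : ℝ) + P' (blk n hn j) := by
        exact_mod_cast (hsum (blk n hn j)).symm
      rw [e1, ← hq (blk n hn j)]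
  have hh0P : isH0 n hn P P' Q h0t := hh0p
  -- abbreviations
  have hseqP : ∀ i, hseq n hn P P' Q h0t i
      = WW n hn P P' Q h0t i * uu n hn P P' Q h0t i := fun i =>
    hseq_eq n hn P P' Q h0t hQp hPPp hh0P i
  have hseqR : ∀ i, hseq n hn R R' U h0t i
      = WW n hn P P' Q h0t i * uu n hn P P' Q h0t i := fun i => by
    show (wh n hn R R' U h0t i).2 = _
    rw [hwh i]
    exact hseqP i
  have hsplitP : splitRatio n hn P P' Q h0t
      = ∑' i, (P (blk n hn i) : ℝ) * (WW n hn P P' Q h0t i * uu n hn P P' Q h0t i) :=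
    tsum_congr fun i => by rw [hseq, ← hseqP i]; rfl
  have hsplitR : splitRatio n hn R R' U h0t
      = ∑' i, (R (blk n hn i) : ℝ) * (WW n hn P P' Q h0t i * uu n hn P P' Q h0t i) :=
    tsum_congr fun i => by rw [hseq, ← hseqR i]; rfl
  -- summability
  have hfs : Summable fun i => (P (blk n hn i) : ℝ)
      * (WW n hn P P' Q h0t i * uu n hn P P' Q h0t i) :=
    summable_aux n hn P P' Q h0t hQp hPPp hh0P (fun i => P (blk n hn i))
      (fun i => Nat.le_add_right _ _)
  have hgs : Summable fun i => (R (blk n hn i) : ℝ)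
      * (WW n hn P P' Q h0t i * uu n hn P P' Q h0t i) :=
    summable_aux n hn P P' Q h0t hQp hPPp hh0P (fun i => R (blk n hn i))
      (fun i => by rw [hsum (blk n hn i)]; exact Nat.le_add_right _ _)
  -- split the P-sum at m+1
  have hsplit := hfs.sum_add_tsum_nat_add (m+1)
  -- tail bound
  have htail := tail_bound n hn P P' Q h0t hQp hPPp hh0P (fun i => P (blk n hn i))
    (fun i => Nat.le_add_right _ _) m
  -- W (m+1) < W m * u m
  have hWu : 0 < WW n hn P P' Q h0t m * uu n hn P P' Q h0t m :=
    mul_pos (W_pos n hn P P' Q h0t hQp hPPp hh0P m) (u_pos n hn P P' Q h0t hQp hPPp hh0P m)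
  have hv1 := v_lt_one n hn P P' Q h0t hQp hPPp hh0P m
  have hv0 := v_pos n hn P P' Q h0t hQp hPPp hh0P m
  have hWm1 : WW n hn P P' Q h0t (m+1) < WW n hn P P' Q h0t m * uu n hn P P' Q h0t m := by
    have : WW n hn P P' Q h0t (m+1)
        = WW n hn P P' Q h0t m * (uu n hn P P' Q h0t m * vv n hn P P' Q h0t m) := rfl
    nlinarith
  -- compare partial sums
  have hparts : (∑ i ∈ Finset.range (m+1), (P (blk n hn i) : ℝ)
        * (WW n hn P P' Q h0t i * uu n hn P P' Q h0t i))
        + WW n hn P P' Q h0t m * uu n hn P P' Q h0t m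
      ≤ ∑ i ∈ Finset.range (m+1), (R (blk n hn i) : ℝ)
        * (WW n hn P P' Q h0t i * uu n hn P P' Q h0t i) := by
    rw [Finset.sum_range_succ, Finset.sum_range_succ]
    have heq : (∑ i ∈ Finset.range m, (P (blk n hn i) : ℝ)
          * (WW n hn P P' Q h0t i * uu n hn P P' Q h0t i))
        = ∑ i ∈ Finset.range m, (R (blk n hn i) : ℝ)
          * (WW n hn P P' Q h0t i * uu n hn P P' Q h0t i) :=
      Finset.sum_congr rfl fun i hi => by rw [hpre i (Finset.mem_range.mp hi)]
    have hm : (P (blk n hn m) : ℝ) * (WW n hn P P' Q h0t m * uu n hn P P' Q h0t m)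
          + WW n hn P P' Q h0t m * uu n hn P P' Q h0t m
        ≤ (R (blk n hn m) : ℝ) * (WW n hn P P' Q h0t m * uu n hn P P' Q h0t m) := by
      have hc : (P (blk n hn m) : ℝ) + 1 ≤ (R (blk n hn m) : ℝ) := by
        exact_mod_cast hstrict
      nlinarith
    linarith
  -- partial R-sum below total
  have hg_ge : (∑ i ∈ Finset.range (m+1), (R (blk n hn i) : ℝ)
        * (WW n hn P P' Q h0t i * uu n hn P P' Q h0t i))
      ≤ ∑' i, (R (blk n hn i) : ℝ) * (WW n hn P P' Q h0t i * uu n hn P P' Q h0t i) := by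
    refine Summable.sum_le_tsum _ (fun i _ => ?_) hgs
    have := mul_pos (W_pos n hn P P' Q h0t hQp hPPp hh0P i) (u_pos n hn P P' Q h0t hQp hPPp hh0P i)
    positivity
  rw [hsplitP, hsplitR, ← hsplit]
  linarith
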